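/- Suppose in the equality analysis of the Prékopa–Leindler inequality there exist a > 0, b ∈ ℝ, and y₁ < y₂ such that for almost every x ∈ ℝ: g(x)/g(x+b) = a·f(y₂-x-b)/f((y₁+y₂)/2 - x) = a·f((y₁+y₂)/2 - x - b)/f(y₁-x), where f is positive and strictly log-concave. Then b = (y₂-y₁)/2 and consequently g(x)/g(x + (y₂-y₁)/2) = a for almost every x; in particular g cannot be strictly log-concave. -/

import Mathlib

open MeasureTheory

/-- Strict log-concavity of a positive function on ℝ. -/
def StrictLogConcave (f : ℝ → ℝ) : Prop :=
  ∀ x y l : ℝ, x ≠ y → 0 < l → l < 1 →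
    f (l * x + (1 - l) * y) > f x ^ l * f y ^ (1 - l)

lemma slc_key {f : ℝ → ℝ} (hf_pos : ∀ x, 0 < f x) (hf : StrictLogConcave f)
    (u c d : ℝ) (hc : 0 < c) (hd : 0 < d) :
    f u * f (u + c + d) < f (u + c) * f (u + d) := by
  have hcd : 0 < c + d := by linarith
  have h1 : f (u + c) > f u ^ (d / (c + d)) * f (u + c + d) ^ (1 - d / (c + d)) := by
    have := hf u (u + c + d) (d / (c + d)) (by linarith)
      (div_pos hd hcd) (by rw [div_lt_one hcd]; linarith)
    have harg : (d / (c + d)) * u + (1 - d / (c + d)) * (u + c + d) = u + c := by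
      field_simp; ring
    rwa [harg] at this
  have h2 : f (u + d) > f u ^ (c / (c + d)) * f (u + c + d) ^ (1 - c / (c + d)) := by
    have := hf u (u + c + d) (c / (c + d)) (by linarith)
      (div_pos hc hcd) (by rw [div_lt_one hcd]; linarith)
    have harg : (c / (c + d)) * u + (1 - c / (c + d)) * (u + c + d) = u + d := by
      field_simp; ring
    rwa [harg] at this
  have hmul := mul_lt_mul'' h1 h2
    (mul_nonneg (Real.rpow_nonneg (hf_pos u).le _) (Real.rpow_nonneg (hf_pos _).le _))
    (mul_nonneg (Real.rpow_nonneg (hf_pos u).le _) (Real.rpow_nonneg (hf_pos _).le _))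
  calc f u * f (u + c + d)
      = (f u ^ (d / (c + d)) * f (u + c + d) ^ (1 - d / (c + d))) *
        (f u ^ (c / (c + d)) * f (u + c + d) ^ (1 - c / (c + d))) := by
        rw [mul_mul_mul_comm, ← Real.rpow_add (hf_pos u), ← Real.rpow_add (hf_pos _)]
        have e1 : d / (c + d) + c / (c + d) = 1 := by field_simp; ring
        have e2 : (1 - d / (c + d)) + (1 - c / (c + d)) = 1 := by field_simp; ring
        rw [e1, e2, Real.rpow_one, Real.rpow_one]
    _ < f (u + c) * f (u + d) := hmul

theorem prekopa_leindler_equality_analysis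
    (f g : ℝ → ℝ)
    (hf_cont : Continuous f) (hg_cont : Continuous g)
    (hf_pos : ∀ x, 0 < f x) (hg_pos : ∀ x, 0 < g x)
    (hf_slc : StrictLogConcave f)
    (a b y₁ y₂ : ℝ) (ha : 0 < a) (hy : y₁ < y₂)
    (hcond1 : ∀ᵐ x : ℝ, g x / g (x + b) = a * f (y₂ - x - b) / f ((y₁ + y₂) / 2 - x))
    (hcond2 : ∀ᵐ x : ℝ, g x / g (x + b) = a * f ((y₁ + y₂) / 2 - x - b) / f (y₁ - x)) :
    b = (y₂ - y₁) / 2 ∧ (∀ᵐ x : ℝ, g x / g (x + (y₂ - y₁) / 2) = a) ∧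
      ¬ StrictLogConcave g := by
  set d : ℝ := (y₂ - y₁) / 2 with hd_def
  have hd : 0 < d := by simp only [hd_def]; linarith
  -- a.e. equality of two continuous functions → everywhere
  have hae : (fun x => a * f (y₂ - x - b) / f ((y₁ + y₂) / 2 - x)) =ᵐ[volume]
      (fun x => a * f ((y₁ + y₂) / 2 - x - b) / f (y₁ - x)) := by
    filter_upwards [hcond1, hcond2] with x h1 h2
    rw [← h1, h2]
  have hcont1 : Continuous fun x : ℝ => a * f (y₂ - x - b) / f ((y₁ + y₂) / 2 - x) :=
    ((continuous_const.mul (hf_cont.comp (by continuity))).div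
      (hf_cont.comp (by continuity)) fun x => (hf_pos _).ne')
  have hcont2 : Continuous fun x : ℝ => a * f ((y₁ + y₂) / 2 - x - b) / f (y₁ - x) :=
    ((continuous_const.mul (hf_cont.comp (by continuity))).div
      (hf_cont.comp (by continuity)) fun x => (hf_pos _).ne')
  have hE := (hcont1.ae_eq_iff_eq volume hcont2).mp hae
  have E : ∀ x : ℝ, a * f (y₂ - x - b) / f ((y₁ + y₂) / 2 - x)
      = a * f ((y₁ + y₂) / 2 - x - b) / f (y₁ - x) := fun x => congrFun hE x
  set c : ℝ := d - b with hc_def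
  have F : ∀ u : ℝ, f (u + c + d) * f u = f (u + c) * f (u + d) := by
    intro u
    have h := E (y₁ - u)
    have e1 : y₂ - (y₁ - u) - b = u + c + d := by simp only [hc_def, hd_def]; ring
    have e2 : (y₁ + y₂) / 2 - (y₁ - u) = u + d := by simp only [hd_def]; ring
    have e4 : y₁ - (y₁ - u) = u := by ring
    rw [e1, e2, e4] at h
    rw [show u + d - b = u + c from by simp only [hc_def, hd_def]; ring] at h
    rw [div_eq_div_iff (hf_pos _).ne' (hf_pos _).ne'] at h
    have h' : a * (f (u + c + d) * f u) = a * (f (u + c) * f (u + d)) := by ring_nf; ring_nf at h; linarith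
    exact mul_left_cancel₀ ha.ne' h'
  have hc0 : c = 0 := by
    by_contra hc0
    rcases lt_or_gt_of_ne hc0 with hneg | hpos
    · have := slc_key hf_pos hf_slc (0 + c) (-c) d (by linarith) hd
      have hF := F 0
      simp only [show (0:ℝ) + c + -c = 0 by ring, show (0:ℝ) + c + -c + d = 0 + d by ring] at this
      nlinarith [this, hF]
    · have := slc_key hf_pos hf_slc 0 c d hpos hd
      have hF := F 0
      nlinarith [this, hF]
  have hb : b = d := by simp only [hc_def] at hc0; linarith
  refine ⟨hb, ?_, ?_⟩
  · filter_upwards [hcond1] with x h1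
    rw [hb] at h1
    have e : y₂ - x - d = (y₁ + y₂) / 2 - x := by simp only [hd_def]; ring
    rw [e] at h1
    rw [h1, mul_div_assoc, div_self (hf_pos _).ne', mul_one]
  · intro hg_slc
    have hae2 : (fun x => g x / g (x + d)) =ᵐ[volume] (fun _ => a) := by
      filter_upwards [hcond1] with x h1
      rw [hb] at h1
      have e : y₂ - x - d = (y₁ + y₂) / 2 - x := by simp only [hd_def]; ring
      rw [e] at h1
      rw [h1, mul_div_assoc, div_self (hf_pos _).ne', mul_one]
    have hcontg : Continuous fun x : ℝ => g x / g (x + d) :=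
      hg_cont.div (hg_cont.comp (by continuity)) fun x => (hg_pos _).ne'
    have hEg := (hcontg.ae_eq_iff_eq volume continuous_const).mp hae2
    have hg1 : g 0 / g (0 + d) = a := congrFun hEg 0
    have hg2 : g d / g (d + d) = a := congrFun hEg d
    have hstrict := hg_slc 0 (d + d) (1/2) (ne_of_lt (by linarith)) (by norm_num) (by norm_num)
    have harg : (1/2 : ℝ) * 0 + (1 - 1/2) * (d + d) = d := by ring
    rw [harg, show (1:ℝ) - 1/2 = 1/2 by norm_num] at hstrict
    have h0 := (hg_pos 0).le
    have h2 := (hg_pos (d + d)).le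
    have hs : (g 0 ^ ((1:ℝ)/2)) ^ (2:ℕ) = g 0 := by
      rw [← Real.rpow_natCast (g 0 ^ ((1:ℝ)/2)), ← Real.rpow_mul h0]; norm_num
    have ht : (g (d + d) ^ ((1:ℝ)/2)) ^ (2:ℕ) = g (d + d) := by
      rw [← Real.rpow_natCast (g (d+d) ^ ((1:ℝ)/2)), ← Real.rpow_mul h2]; norm_num
    have hsq : g 0 * g (d + d) < g d * g d := by
      nlinarith [hstrict, hs, ht,
        mul_nonneg (Real.rpow_nonneg h0 ((1:ℝ)/2)) (Real.rpow_nonneg h2 ((1:ℝ)/2))]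
    rw [zero_add] at hg1
    have hg0 : g 0 = a * g d := by
      rw [div_eq_iff (hg_pos d).ne'] at hg1; linarith
    have hgd : g d = a * g (d + d) := by
      rw [div_eq_iff (hg_pos (d+d)).ne'] at hg2; linarith
    have : g 0 * g (d + d) = g d * g d := by rw [hg0, hgd]; ring
    linarith
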